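/- Let η : (0,∞) → ℝ be concave. Then the function η' defined for p' > 1 by η'(p') := (p'-1)(1 - η(p'/(p'-1))) + 1 is convex on (1,∞); that is, for p'_1, p'_2 > 1, η'((p'_1+p'_2)/2) ≤ (η'(p'_1)+η'(p'_2))/2. -/

import Mathlib

noncomputable section
open Filter Set Topology

theorem stmt12 (η : ℝ → ℝ) (hconc : ConcaveOn ℝ (Set.Ioi (0 : ℝ)) η) :
    ∀ p₁ p₂ : ℝ, 1 < p₁ → 1 < p₂ →
      (fun p' : ℝ => (p' - 1) * (1 - η (p' / (p' - 1))) + 1) ((p₁ + p₂) / 2) ≤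
        ((fun p' : ℝ => (p' - 1) * (1 - η (p' / (p' - 1))) + 1) p₁ +
          (fun p' : ℝ => (p' - 1) * (1 - η (p' / (p' - 1))) + 1) p₂) / 2 := by
  intro p₁ p₂ h₁ h₂
  simp only
  have ha : (0:ℝ) < p₁ - 1 := by linarith
  have hb : (0:ℝ) < p₂ - 1 := by linarith
  have hs : (0:ℝ) < p₁ + p₂ - 2 := by linarith
  have hx : p₁ / (p₁ - 1) ∈ Set.Ioi (0:ℝ) := div_pos (by linarith) ha
  have hy : p₂ / (p₂ - 1) ∈ Set.Ioi (0:ℝ) := div_pos (by linarith) hb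
  have hμ : (0:ℝ) ≤ (p₁ - 1) / (p₁ + p₂ - 2) := le_of_lt (div_pos ha hs)
  have hν : (0:ℝ) ≤ (p₂ - 1) / (p₁ + p₂ - 2) := le_of_lt (div_pos hb hs)
  have hsum : (p₁ - 1) / (p₁ + p₂ - 2) + (p₂ - 1) / (p₁ + p₂ - 2) = 1 := by
    rw [← add_div, div_eq_one_iff_eq hs.ne']
    ring
  have key := hconc.2 hx hy hμ hν hsum
  simp only [smul_eq_mul] at key
  have hm : (0:ℝ) < (p₁ + p₂) / 2 - 1 := by linarith
  have hM : (p₁ - 1) / (p₁ + p₂ - 2) * (p₁ / (p₁ - 1)) +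
      (p₂ - 1) / (p₁ + p₂ - 2) * (p₂ / (p₂ - 1)) =
      ((p₁ + p₂) / 2) / ((p₁ + p₂) / 2 - 1) := by
    rw [div_mul_div_comm, div_mul_div_comm, mul_comm (p₁ + p₂ - 2) (p₁ - 1),
      mul_comm (p₁ + p₂ - 2) (p₂ - 1), mul_div_mul_left _ _ ha.ne',
      mul_div_mul_left _ _ hb.ne', ← add_div, div_eq_div_iff hs.ne' hm.ne']
    ring
  rw [hM] at key
  have key2 : (p₁ - 1) * η (p₁ / (p₁ - 1)) + (p₂ - 1) * η (p₂ / (p₂ - 1)) ≤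
      (p₁ + p₂ - 2) * η ((p₁ + p₂) / 2 / ((p₁ + p₂) / 2 - 1)) := by
    have h := mul_le_mul_of_nonneg_left key hs.le
    rw [mul_add, ← mul_assoc, ← mul_assoc, mul_div_cancel₀ _ hs.ne',
      mul_div_cancel₀ _ hs.ne'] at h
    exact h
  nlinarith [key2]
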